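/- Let t₀ > 0 and k > 0 be real numbers and let h : ℝ → ℝ be continuous on [0, t₀). If v : (0, t₀) → ℝ is differentiable with v′(t) = −(k/t)·v(t) + h(t) for all t ∈ (0, t₀), and v is bounded on (0, δ) for some 0 < δ ≤ t₀, then v(t) = t^(−k) · ∫₀ᵗ sᵏ h(s) ds for all t ∈ (0, t₀); in particular any two solutions that are bounded near t = 0 coincide. -/

import Mathlib

open MeasureTheory intervalIntegral Set Filter Topology

lemma aux_key (t₀ k : ℝ) (ht₀ : 0 < t₀) (hk : 0 < k) (h : ℝ → ℝ)
    (hcont : ContinuousOn h (Set.Ico 0 t₀)) (v : ℝ → ℝ)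
    (hv : ∀ t ∈ Set.Ioo (0 : ℝ) t₀, HasDerivAt v (-(k / t) * v t + h t) t)
    (δ : ℝ) (hδ0 : 0 < δ) (hδ : δ ≤ t₀)
    (hbdd : ∃ C : ℝ, ∀ t ∈ Set.Ioo (0 : ℝ) δ, |v t| ≤ C) :
    ∀ t ∈ Set.Ioo (0 : ℝ) t₀, v t = t ^ (-k) * ∫ s in (0 : ℝ)..t, s ^ k * h s := by
  obtain ⟨C, hC⟩ := hbdd
  have hC0 : 0 ≤ C := (abs_nonneg _).trans (hC (δ/2) ⟨by linarith, by linarith⟩)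
  set f : ℝ → ℝ := fun s => s ^ k * h s with hf
  have hrpow : Continuous fun s : ℝ => s ^ k := by
    rw [continuous_iff_continuousAt]
    intro x
    exact Real.continuousAt_rpow_const x k (Or.inr hk.le)
  have hfc : ContinuousOn f (Set.Ico 0 t₀) := hrpow.continuousOn.mul hcont
  -- derivative of w = t^k * v t
  have hw : ∀ t ∈ Set.Ioo (0 : ℝ) t₀, HasDerivAt (fun t => t ^ k * v t) (f t) t := by
    intro t ht
    have ht0 : (0:ℝ) < t := ht.1
    have h1 : HasDerivAt (fun t : ℝ => t ^ k) (k * t ^ (k - 1)) t :=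
      Real.hasDerivAt_rpow_const (Or.inl ht0.ne')
    have h2 := (h1.mul (hv t ht))
    convert h2 using 1
    case e'_4 => rfl
    case e'_5 => rfl
    case e'_8 => rfl
    have hts : t ^ (k - 1) = t ^ k / t := by
      rw [Real.rpow_sub ht0, Real.rpow_one]
    rw [hts]
    simp only [hf]
    field_simp
    ring
  intro t ht
  have ht0 : (0:ℝ) < t := ht.1
  have htt : t < t₀ := ht.2
  have hsub : Set.Icc (0:ℝ) t ⊆ Set.Ico 0 t₀ := fun x hx => ⟨hx.1, lt_of_le_of_lt hx.2 htt⟩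
  have hfct : ContinuousOn f (Set.Icc 0 t) := hfc.mono hsub
  obtain ⟨M, hM⟩ := (isCompact_Icc (a := (0:ℝ)) (b := t)).exists_bound_of_continuousOn hfct
  have hIntab : ∀ a b, a ∈ Set.Icc (0:ℝ) t → b ∈ Set.Icc (0:ℝ) t →
      IntervalIntegrable f volume a b := by
    intro a b ha hb
    exact (hfct.mono (Set.uIcc_subset_Icc ha hb)).intervalIntegrable
  -- FTC on [ε, t]
  have hFTC : ∀ ε ∈ Set.Ioo (0:ℝ) t,
      (∫ s in ε..t, f s) = t ^ k * v t - ε ^ k * v ε := by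
    intro ε hε
    apply intervalIntegral.integral_eq_sub_of_hasDerivAt
    · intro x hx
      rw [Set.uIcc_of_le hε.2.le] at hx
      exact hw x ⟨lt_of_lt_of_le hε.1 hx.1, lt_of_le_of_lt hx.2 htt⟩
    · exact hIntab ε t ⟨hε.1.le, hε.2.le⟩ ⟨ht0.le, le_refl t⟩
  -- key identity : for ε ∈ (0, min δ t): t^k v t = ε^k v ε + ∫_0^t f - ∫_0^ε f
  have hEq : ∀ᶠ ε in 𝓝[>] (0:ℝ),
      ε ^ k * v ε + ((∫ s in (0:ℝ)..t, f s) - ∫ s in (0:ℝ)..ε, f s) = t ^ k * v t := by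
    filter_upwards [Ioo_mem_nhdsGT_of_mem (Set.left_mem_Ico.mpr (lt_min hδ0 ht0))]
      with ε hε
    have hε0 : (0:ℝ) < ε := hε.1
    have hεt : ε < t := lt_of_lt_of_le hε.2 (min_le_right _ _)
    have hsplit : (∫ s in (0:ℝ)..ε, f s) + (∫ s in ε..t, f s) = ∫ s in (0:ℝ)..t, f s :=
      intervalIntegral.integral_add_adjacent_intervals
        (hIntab 0 ε ⟨le_refl 0, ht0.le⟩ ⟨hε0.le, hεt.le⟩)
        (hIntab ε t ⟨hε0.le, hεt.le⟩ ⟨ht0.le, le_refl t⟩)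
    have := hFTC ε ⟨hε0, hεt⟩
    linarith [hsplit, this]
  -- limits
  have hεk : Tendsto (fun ε : ℝ => ε ^ k) (𝓝[>] 0) (𝓝 0) := by
    have := hrpow.tendsto 0
    rw [Real.zero_rpow hk.ne'] at this
    exact this.mono_left nhdsWithin_le_nhds
  have lim1 : Tendsto (fun ε : ℝ => ε ^ k * v ε) (𝓝[>] 0) (𝓝 0) := by
    apply squeeze_zero_norm'
    · filter_upwards [Ioo_mem_nhdsGT_of_mem (Set.left_mem_Ico.mpr hδ0)] with ε hε
      have hε0 : (0:ℝ) < ε := hε.1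
      calc ‖ε ^ k * v ε‖ = ε ^ k * |v ε| := by
            rw [Real.norm_eq_abs, abs_mul, abs_of_nonneg (Real.rpow_nonneg hε0.le k)]
        _ ≤ ε ^ k * C := by
            exact mul_le_mul_of_nonneg_left (hC ε hε) (Real.rpow_nonneg hε0.le k)
    · have : Tendsto (fun ε : ℝ => ε ^ k * C) (𝓝[>] 0) (𝓝 (0 * C)) := hεk.mul_const C
      simpa using this
  have lim2 : Tendsto (fun ε : ℝ => ∫ s in (0:ℝ)..ε, f s) (𝓝[>] 0) (𝓝 0) := by
    have hg : Tendsto (fun ε : ℝ => M * ε) (𝓝[>] 0) (𝓝 0) := by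
      have : Tendsto (fun ε : ℝ => M * ε) (𝓝[>] 0) (𝓝 (M * 0)) :=
        (tendsto_id.const_mul M).mono_left nhdsWithin_le_nhds
      simpa using this
    refine squeeze_zero_norm' ?_ hg
    filter_upwards [Ioo_mem_nhdsGT_of_mem (Set.left_mem_Ico.mpr ht0)] with ε hε
    calc ‖∫ s in (0:ℝ)..ε, f s‖ ≤ M * |ε - 0| := by
          apply intervalIntegral.norm_integral_le_of_norm_le_const
          intro x hx
          rw [Set.uIoc_of_le hε.1.le] at hx
          exact hM x ⟨hx.1.le, hx.2.trans hε.2.le⟩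
      _ = M * ε := by rw [sub_zero, abs_of_pos hε.1]
  have limAll : Tendsto (fun ε : ℝ => ε ^ k * v ε + ((∫ s in (0:ℝ)..t, f s) - ∫ s in (0:ℝ)..ε, f s))
      (𝓝[>] 0) (𝓝 (∫ s in (0:ℝ)..t, f s)) := by
    have := lim1.add ((tendsto_const_nhds (x := ∫ s in (0:ℝ)..t, f s)
      (f := 𝓝[>] (0:ℝ))).sub lim2)
    simpa using this
  have hfinal : t ^ k * v t = ∫ s in (0:ℝ)..t, f s := by
    have h1 : Tendsto (fun _ : ℝ => t ^ k * v t) (𝓝[>] (0:ℝ)) (𝓝 (t ^ k * v t)) :=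
      tendsto_const_nhds
    exact (tendsto_nhds_unique (limAll.congr' hEq) h1).symm
  have htk : (0:ℝ) < t ^ k := Real.rpow_pos_of_pos ht0 k
  rw [Real.rpow_neg ht0.le]
  field_simp
  linarith [hfinal]

theorem stmt_1 (t₀ k : ℝ) (ht₀ : 0 < t₀) (hk : 0 < k) (h : ℝ → ℝ)
    (hcont : ContinuousOn h (Set.Ico 0 t₀)) (v : ℝ → ℝ)
    (hv : ∀ t ∈ Set.Ioo (0 : ℝ) t₀, HasDerivAt v (-(k / t) * v t + h t) t)
    (δ : ℝ) (hδ0 : 0 < δ) (hδ : δ ≤ t₀)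
    (hbdd : ∃ C : ℝ, ∀ t ∈ Set.Ioo (0 : ℝ) δ, |v t| ≤ C) :
    (∀ t ∈ Set.Ioo (0 : ℝ) t₀, v t = t ^ (-k) * ∫ s in (0 : ℝ)..t, s ^ k * h s)
    ∧ ∀ v₂ : ℝ → ℝ,
        (∀ t ∈ Set.Ioo (0 : ℝ) t₀, HasDerivAt v₂ (-(k / t) * v₂ t + h t) t) →
        (∃ δ₂ : ℝ, 0 < δ₂ ∧ δ₂ ≤ t₀ ∧ ∃ C : ℝ, ∀ t ∈ Set.Ioo (0 : ℝ) δ₂, |v₂ t| ≤ C) →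
        ∀ t ∈ Set.Ioo (0 : ℝ) t₀, v t = v₂ t := by
  have h1 := aux_key t₀ k ht₀ hk h hcont v hv δ hδ0 hδ hbdd
  refine ⟨h1, ?_⟩
  rintro v₂ hv₂ ⟨δ₂, hδ₂0, hδ₂, hbdd₂⟩ t ht
  rw [h1 t ht, aux_key t₀ k ht₀ hk h hcont v₂ hv₂ δ₂ hδ₂0 hδ₂ hbdd₂ t ht]
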